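/- Let a, b, c be pairwise distinct real numbers and m an arbitrary real number. Define H_A = (m − a, (b + c)(m − a) − bc), H_B = (m − b, (c + a)(m − b) − ca), H_C = (m − c, (a + b)(m − c) − ab). Then each of H_A, H_B, H_C lies on the line y = m·x + (m(a + b + c) − m² − (ab + bc + ca)); in particular H_A, H_B, H_C are collinear, on a line whose slope m equals the Simson direction. -/
import Mathlib

/-- DA Simson theorem: for pairwise distinct `a, b, c` and any Simson direction `m`,
the feet `H_A = (m−a, (b+c)(m−a) − bc)`, `H_B = (m−b, (c+a)(m−b) − ca)`,
`H_C = (m−c, (a+b)(m−c) − ab)` all lie on the line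
`y = m x + (m(a+b+c) − m² − (ab+bc+ca))`; in particular they are collinear on a
line of slope `m`. -/
theorem da_simson (a b c m : ℝ) (hab : a ≠ b) (hbc : b ≠ c) (hac : a ≠ c) :
    ((b + c) * (m - a) - b * c =
        m * (m - a) + (m * (a + b + c) - m ^ 2 - (a * b + b * c + c * a))) ∧
    ((c + a) * (m - b) - c * a =
        m * (m - b) + (m * (a + b + c) - m ^ 2 - (a * b + b * c + c * a))) ∧
    ((a + b) * (m - c) - a * b =
        m * (m - c) + (m * (a + b + c) - m ^ 2 - (a * b + b * c + c * a))) ∧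
    Collinear ℝ ({(m - a, (b + c) * (m - a) - b * c),
                  (m - b, (c + a) * (m - b) - c * a),
                  (m - c, (a + b) * (m - c) - a * b)} : Set (ℝ × ℝ)) := by
  refine ⟨by ring, by ring, by ring, ?_⟩
  rw [collinear_iff_of_mem (Set.mem_insert _ _)]
  refine ⟨(1, m), ?_⟩
  rintro p (rfl | rfl | rfl)
  · exact ⟨0, by simp⟩
  · exact ⟨a - b, by simp [Prod.ext_iff]; ring⟩
  · exact ⟨a - c, by simp [Prod.ext_iff]; ring⟩
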